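/- (Lemma 4.2, second part) Let R be a (not necessarily associative) algebra over a field F, G a group, and let R = ⊕_{g∈G} R_g and R = ⊕_{g∈G} R̃_g be two G-gradings of the algebra R (so R_g R_h ⊆ R_{gh} and R̃_g R̃_h ⊆ R̃_{gh}) that are compatible as vector space gradings, i.e. R̃_g = ⊕_{x∈G} (R_x ∩ R̃_g) for every g ∈ G. Let H be a subgroup of G contained in the center Z(G) such that the two factor-gradings by G/H coincide. For h ∈ H set R^h = ⊕_{g∈G} (R̃_g ∩ R_{gh}). Then R = ⊕_{h∈H} R^h is an H-grading of the algebra R; in particular R^{h₁} R^{h₂} ⊆ R^{h₁h₂} for all h₁, h₂ ∈ H. -/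

import Mathlib

section Aux

variable {F A : Type*} [Field F] [AddCommGroup A] [Module F A]

/-- Zero-sum property of an independent family of submodules. -/
lemma zsum_aux {ι : Type*} (p : ι → Submodule F A) (hp : iSupIndep p) (f : ι →₀ A)
    (hf : ∀ i, f i ∈ p i) (hsum : (f.sum fun _ x => x) = 0) : ∀ i, f i = 0 := by
  classical
  intro i
  by_cases hi : i ∈ f.support
  · have h1 : f i = - ∑ j ∈ f.support.erase i, f j := by
      have h := hsum
      rw [Finsupp.sum, ← Finset.add_sum_erase _ _ hi] at h
      exact eq_neg_of_add_eq_zero_left h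
    have h2 : f i ∈ ⨆ (j) (_ : j ≠ i), p j := by
      rw [h1]
      refine neg_mem (Submodule.sum_mem _ fun j hj => ?_)
      refine Submodule.mem_iSup_of_mem j ?_
      rw [iSup_pos (Finset.ne_of_mem_erase hj)]
      exact hf j
    exact Submodule.disjoint_def.mp (hp i) (f i) (hf i) h2
  · exact Finsupp.notMem_support_iff.mp hi

/-- Zero-sum property for a doubly-indexed family dominated by an independent family
with independent fibers. -/
lemma zsum_pair_aux {ι κ : Type*} (P : ι × κ → Submodule F A) (Q : ι → Submodule F A)
    (hPQ : ∀ z, P z ≤ Q z.1) (hQ : iSupIndep Q)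
    (hfib : ∀ i, iSupIndep (fun k => P (i, k)))
    (d : (ι × κ) →₀ A) (hd : ∀ z, d z ∈ P z) (hsum : (d.sum fun _ x => x) = 0) :
    ∀ z, d z = 0 := by
  classical
  set e : ι →₀ A := d.curry.mapRange (fun m => m.sum fun _ x => x) Finsupp.sum_zero_index with he
  have he_apply : ∀ i, e i = (d.curry i).sum fun _ x => x := fun i => Finsupp.mapRange_apply
  have he_mem : ∀ i, e i ∈ Q i := by
    intro i
    rw [he_apply]
    refine Submodule.sum_mem _ fun k hk => hPQ (i, k) ?_
    show (d.curry i) k ∈ P (i, k)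
    rw [Finsupp.curry_apply]
    exact hd (i, k)
  have he_sum : (e.sum fun _ x => x) = 0 := by
    rw [he, Finsupp.sum_mapRange_index (fun _ => rfl)]
    rw [Finsupp.sum_curry_index _ (fun _ _ c => c)]
    exact hsum
  have hzero := zsum_aux Q hQ e he_mem he_sum
  rintro ⟨i, k⟩
  have hfibzero : ∀ k', (d.curry i) k' = 0 := by
    apply zsum_aux (fun k => P (i, k)) (hfib i) (d.curry i)
    · intro k'; rw [Finsupp.curry_apply]; exact hd (i, k')
    · rw [← he_apply]; exact hzero i
  have := hfibzero k
  rwa [Finsupp.curry_apply] at this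

end Aux

/-- The component `R^h = ⊕_{g∈G} (R̃_g ⊓ R_{gh})` of the exchanged grading. -/
def exchangeComponent {F A : Type*} [Field F] [NonUnitalNonAssocRing A] [Module F A]
    {G : Type*} [Group G] (R Rt : G → Submodule F A) (h : G) : Submodule F A :=
  ⨆ g : G, (Rt g ⊓ R (g * h))

/-- Lemma 4.2 (second part): given two compatible `G`-gradings of a (not necessarily
associative) algebra `R`, with `H ⊆ Z(G)` a subgroup such that the two factor-gradings
modulo `H` coincide, the subspaces `R^h = ⊕_{g∈G} (R̃_g ⊓ R_{gh})`, `h ∈ H`, form an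
`H`-grading of the algebra `R`; in particular `R^{h₁} R^{h₂} ⊆ R^{h₁h₂}`. -/
theorem stmt_10 {F A : Type*} [Field F] [NonUnitalNonAssocRing A] [Module F A]
    [SMulCommClass F A A] [IsScalarTower F A A]
    {G : Type*} [Group G]
    (R Rt : G → Submodule F A)
    (hRindep : iSupIndep R) (hRsup : ⨆ g, R g = ⊤)
    (hRmul : ∀ g h : G, ∀ x ∈ R g, ∀ y ∈ R h, x * y ∈ R (g * h))
    (hRtindep : iSupIndep Rt) (hRtsup : ⨆ g, Rt g = ⊤)
    (hRtmul : ∀ g h : G, ∀ x ∈ Rt g, ∀ y ∈ Rt h, x * y ∈ Rt (g * h))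
    (hcompat : ∀ g : G, Rt g = ⨆ x : G, (R x ⊓ Rt g))
    (H : Subgroup G) (hHcentral : H ≤ Subgroup.center G)
    (hfactor : ∀ g : G, (⨆ h : H, R (g * (h : G))) = ⨆ h : H, Rt (g * (h : G))) :
    iSupIndep (fun h : H => exchangeComponent R Rt (h : G)) ∧
    (⨆ h : H, exchangeComponent R Rt (h : G)) = ⊤ ∧
    (∀ h₁ h₂ : H, ∀ x ∈ exchangeComponent R Rt (h₁ : G), ∀ y ∈ exchangeComponent R Rt (h₂ : G),
      x * y ∈ exchangeComponent R Rt ((h₁ * h₂ : H) : G)) := by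
  classical
  -- the fine family over G × H
  set P : G × H → Submodule F A := fun z => Rt z.1 ⊓ R (z.1 * (z.2 : G)) with hP
  have hPfib : ∀ g : G, iSupIndep (fun k : H => P (g, k)) := by
    intro g
    have h1 : iSupIndep (fun k : H => R (g * (k : G))) := by
      apply hRindep.comp
      intro a b hab
      exact Subtype.ext (mul_left_cancel hab)
    exact h1.mono fun k => inf_le_right
  refine ⟨?_, ?_, ?_⟩
  · -- independence
    intro h₀
    rw [Submodule.disjoint_def]
    intro v hv₀ hv₁
    -- decompose hv₀
    simp only [exchangeComponent] at hv₀
    rw [Submodule.mem_iSup_iff_exists_finsupp] at hv₀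
    obtain ⟨f, hf, hfsum⟩ := hv₀
    -- rewrite hv₁ as a single iSup
    have hv₁' : v ∈ ⨆ z : {h : H // h ≠ h₀} × G, (Rt z.2 ⊓ R (z.2 * ((z.1 : H) : G))) := by
      rw [iSup_prod]
      have : (⨆ (h : H) (_ : h ≠ h₀), exchangeComponent R Rt (h : G))
          = ⨆ (q : {h : H // h ≠ h₀}), exchangeComponent R Rt ((q : H) : G) := by
        rw [iSup_subtype']
      rw [this] at hv₁
      simp only [exchangeComponent] at hv₁
      exact hv₁
    rw [Submodule.mem_iSup_iff_exists_finsupp] at hv₁'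
    obtain ⟨c, hc, hcsum⟩ := hv₁'
    -- combine into a single finsupp on G × H
    set e₁ : G ↪ G × H := ⟨fun g => (g, h₀), fun a b hab => (Prod.ext_iff.mp hab).1⟩ with he₁
    set e₂ : ({h : H // h ≠ h₀} × G) ↪ G × H :=
      ⟨fun z => (z.2, (z.1 : H)), by
        rintro ⟨q, g⟩ ⟨q', g'⟩ hab
        obtain ⟨h1, h2⟩ := Prod.ext_iff.mp hab
        exact Prod.ext (Subtype.ext h2) h1⟩ with he₂
    set d : (G × H) →₀ A := f.embDomain e₁ - c.embDomain e₂ with hd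
    have hdmem : ∀ z, d z ∈ P z := by
      rintro ⟨g, h⟩
      rw [hd, Finsupp.sub_apply]
      by_cases hh : h = h₀
      · subst hh
        have h1 : f.embDomain e₁ (g, h) = f g := Finsupp.embDomain_apply_self e₁ f g
        have h2 : c.embDomain e₂ (g, h) = 0 := by
          apply Finsupp.embDomain_notin_range
          rintro ⟨⟨q, g'⟩, hq⟩
          simp only [he₂, Function.Embedding.coeFn_mk, Prod.mk.injEq] at hq
          exact q.2 (Prod.ext_iff.mp hq).2
        rw [h1, h2, sub_zero]
        exact hf g
      · have h1 : f.embDomain e₁ (g, h) = 0 := by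
          apply Finsupp.embDomain_notin_range
          rintro ⟨g', hg'⟩
          exact hh ((Prod.ext_iff.mp hg').2).symm
        have h2 : c.embDomain e₂ (g, h) = c (⟨h, hh⟩, g) :=
          Finsupp.embDomain_apply_self e₂ c (⟨h, hh⟩, g)
        rw [h1, h2, zero_sub]
        exact neg_mem (hc (⟨h, hh⟩, g))
    have hdsum : (d.sum fun _ x => x) = 0 := by
      rw [hd, Finsupp.sum_sub_index (fun _ _ _ => rfl), Finsupp.sum_embDomain,
        Finsupp.sum_embDomain, hfsum, hcsum, sub_self]
    have hdz := zsum_pair_aux P Rt (fun z => inf_le_left) hRtindep hPfib d hdmem hdsum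
    have hfz : ∀ g, f g = 0 := by
      intro g
      have := hdz (g, h₀)
      rw [hd, Finsupp.sub_apply] at this
      have h1 : f.embDomain e₁ (g, h₀) = f g := Finsupp.embDomain_apply_self e₁ f g
      have h2 : c.embDomain e₂ (g, h₀) = 0 := by
        apply Finsupp.embDomain_notin_range
        rintro ⟨⟨q, g'⟩, hq⟩
        simp only [he₂, Function.Embedding.coeFn_mk, Prod.mk.injEq] at hq
        exact q.2 (Prod.ext_iff.mp hq).2
      rw [h1, h2, sub_zero] at this
      exact this
    rw [← hfsum, Finsupp.sum]
    exact Finset.sum_eq_zero fun g _ => hfz g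
  · -- supremum is ⊤
    rw [eq_top_iff, ← hRtsup]
    refine iSup_le fun g => ?_
    rw [hcompat g]
    refine iSup_le fun x => ?_
    by_cases hx : ∃ h : H, x = g * (h : G)
    · obtain ⟨h, rfl⟩ := hx
      refine le_trans ?_ (le_iSup _ h)
      show R (g * (h:G)) ⊓ Rt g ≤ exchangeComponent R Rt (h : G)
      simp only [exchangeComponent]
      refine le_trans ?_ (le_iSup _ g)
      rw [inf_comm]
    · have hle : Rt g ≤ ⨆ (y) (_ : y ≠ x), R y := by
        have h1 : Rt g ≤ ⨆ h : H, Rt (g * (h : G)) := by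
          refine le_trans ?_ (le_iSup _ (1 : H))
          simp
        have h2 : (⨆ h : H, Rt (g * (h : G))) = ⨆ h : H, R (g * (h : G)) := (hfactor g).symm
        refine h1.trans (h2.le.trans (iSup_le fun h => ?_))
        have : g * (h : G) ≠ x := fun heq => hx ⟨h, heq.symm⟩
        exact le_trans (le_of_eq rfl) (le_iSup₂ (f := fun y (_ : y ≠ x) => R y) (g * (h : G)) this)
      have : R x ⊓ Rt g ≤ R x ⊓ ⨆ (y) (_ : y ≠ x), R y := inf_le_inf_left _ hle
      rw [disjoint_iff.mp (hRindep x)] at this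
      exact this.trans bot_le
  · -- multiplicativity
    intro h₁ h₂ x hx y hy
    simp only [exchangeComponent] at hx hy ⊢
    rw [Submodule.mem_iSup_iff_exists_finsupp] at hx hy
    obtain ⟨f, hf, hfs⟩ := hx
    obtain ⟨f', hf', hgs⟩ := hy
    rw [← hfs, ← hgs, Finsupp.sum, Finsupp.sum, Finset.sum_mul_sum]
    refine Submodule.sum_mem _ fun g₁ _ => Submodule.sum_mem _ fun g₂ _ => ?_
    have h1 : f g₁ * f' g₂ ∈ Rt (g₁ * g₂) := hRtmul _ _ _ (hf g₁).1 _ (hf' g₂).1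
    have h2 : f g₁ * f' g₂ ∈ R (g₁ * (h₁ : G) * (g₂ * (h₂ : G))) :=
      hRmul _ _ _ (hf g₁).2 _ (hf' g₂).2
    have hcomm : (h₁ : G) * g₂ = g₂ * (h₁ : G) :=
      (Subgroup.mem_center_iff.mp (hHcentral h₁.2) g₂).symm
    have heq : g₁ * (h₁ : G) * (g₂ * (h₂ : G)) = g₁ * g₂ * ((h₁ * h₂ : H) : G) := by
      push_cast
      rw [show g₁ * (h₁:G) * (g₂ * (h₂:G)) = g₁ * ((h₁:G) * g₂) * (h₂:G) by group, hcomm]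
      group
    rw [heq] at h2
    exact Submodule.mem_iSup_of_mem (g₁ * g₂) ⟨h1, h2⟩
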